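/- Let p be a monic real polynomial of degree n with n distinct real roots λ_1, …, λ_n, and define q(x,θ) = Σ_{k=0}^{⌊n/2⌋} ((−θ)^k/k!) · p^{(2k)}(x). Fix an index i and suppose r is a real-valued function, differentiable at 0, with r(0) = λ_i and q(r(θ), θ) = 0 for all θ in a neighborhood of 0. Then r'(0) = Σ_{j≠i} 2/(λ_i − λ_j). -/

import Mathlib

open Polynomial

noncomputable section

lemma polyDerivProd {ι : Type*} [DecidableEq ι] (s : Finset ι) (f : ι → ℝ[X]) :
    derivative (∏ i ∈ s, f i) = ∑ i ∈ s, (∏ a ∈ s.erase i, f a) * derivative (f i) := by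
  classical
  induction s using Finset.induction with
  | empty => simp
  | insert _ _ hx ih =>
    rename_i a s
    rw [Finset.prod_insert hx, derivative_mul, ih, Finset.sum_insert hx,
      Finset.erase_insert hx, Finset.mul_sum]
    rw [mul_comm (derivative (f a))]
    congr 1
    refine Finset.sum_congr rfl fun b hb => ?_
    rw [Finset.erase_insert_of_ne (by rintro rfl; exact hx hb), Finset.prod_insert
      (fun h => hx (Finset.mem_of_mem_erase h)), mul_assoc]

theorem stmt4 (n : ℕ) (p : ℝ[X]) (hmonic : p.Monic) (hdeg : p.natDegree = n)
    (lam : Fin n → ℝ) (hinj : Function.Injective lam)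
    (hroots : ∀ j, p.eval (lam j) = 0)
    (i : Fin n) (r : ℝ → ℝ) (hr : DifferentiableAt ℝ r 0) (hr0 : r 0 = lam i)
    (hq : ∀ᶠ θ in nhds (0 : ℝ),
      ∑ k ∈ Finset.range (n / 2 + 1),
        (-θ) ^ k / (k.factorial : ℝ) * ((fun q => derivative q)^[2 * k] p).eval (r θ) = 0) :
    deriv r 0 = ∑ j ∈ Finset.univ.erase i, 2 / (lam i - lam j) := by
  classical
  -- factorization
  have hQ : p = ∏ j : Fin n, (X - C (lam j)) := by
    have hdvd : (∏ j : Fin n, (X - C (lam j))) ∣ p := by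
      refine Finset.prod_dvd_of_coprime ?_ (fun j _ => (dvd_iff_isRoot).2 (hroots j))
      exact (pairwise_coprime_X_sub_C hinj).set_pairwise _
    have hQm : (∏ j : Fin n, (X - C (lam j))).Monic :=
      monic_prod_of_monic _ _ fun j _ => monic_X_sub_C _
    have hQdeg : (∏ j : Fin n, (X - C (lam j))).natDegree = n := by
      rw [natDegree_prod_of_monic _ _ fun j _ => monic_X_sub_C _]
      simp
    obtain ⟨c, hc⟩ := hdvd
    have hcm : c.Monic := hQm.of_mul_monic_left (hc ▸ hmonic)
    have hcdeg : c.natDegree = 0 := by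
      have h1 := hQm.natDegree_mul hcm
      rw [← hc, hdeg, hQdeg] at h1
      omega
    obtain ⟨x, hx⟩ := natDegree_eq_zero.1 hcdeg
    have : x = 1 := by
      have := hcm
      rw [← hx] at this
      simpa [Monic, leadingCoeff] using this
    rw [hc, ← hx, this, map_one, mul_one]
  -- derivative evaluations
  have hD1 : derivative p = ∑ j ∈ Finset.univ, ∏ a ∈ Finset.univ.erase j, (X - C (lam a)) := by
    rw [hQ, polyDerivProd]
    simp
  have hP1 : eval (lam i) (derivative p) = ∏ a ∈ Finset.univ.erase i, (lam i - lam a) := by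
    rw [hD1, eval_finset_sum, Finset.sum_eq_single i]
    · simp [eval_prod]
    · intro j _ hji
      rw [eval_prod]
      refine Finset.prod_eq_zero (i := i)
        (Finset.mem_erase.2 ⟨Ne.symm hji, Finset.mem_univ i⟩) (by simp)
    · simp
  have hD2 : derivative (derivative p) = ∑ j ∈ Finset.univ, ∑ m ∈ Finset.univ.erase j,
      ∏ a ∈ (Finset.univ.erase j).erase m, (X - C (lam a)) := by
    rw [hD1, map_sum]
    refine Finset.sum_congr rfl fun j _ => ?_
    rw [polyDerivProd]
    simp
  have hP2 : eval (lam i) (derivative (derivative p)) =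
      2 * ∑ j ∈ Finset.univ.erase i, ∏ a ∈ (Finset.univ.erase i).erase j, (lam i - lam a) := by
    rw [hD2]
    simp only [eval_finset_sum, eval_prod, eval_sub, eval_X, eval_C]
    rw [← Finset.add_sum_erase _ _ (Finset.mem_univ i)]
    have h2 : ∀ j ∈ Finset.univ.erase i,
        (∑ m ∈ Finset.univ.erase j, ∏ a ∈ (Finset.univ.erase j).erase m, (lam i - lam a))
          = ∏ a ∈ (Finset.univ.erase i).erase j, (lam i - lam a) := by
      intro j hj
      obtain ⟨hji, -⟩ := Finset.mem_erase.1 hj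
      rw [Finset.sum_eq_single i]
      · rw [Finset.erase_right_comm]
      · intro m _ hmi
        refine Finset.prod_eq_zero (i := i) (Finset.mem_erase.2 ⟨Ne.symm hmi,
          Finset.mem_erase.2 ⟨Ne.symm hji, Finset.mem_univ i⟩⟩) (by simp)
      · intro h
        exact absurd (Finset.mem_erase.2 ⟨Ne.symm hji, Finset.mem_univ i⟩) h
    rw [Finset.sum_congr rfl h2]
    ring
  -- analysis
  set D : ℝ[X] → ℝ[X] := fun q => derivative q with hD
  set A' : ℕ → ℝ := fun k => (↑k * (-(0:ℝ)) ^ (k - 1) * (-1) / (k.factorial : ℝ)) *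
      eval (r 0) (D^[2 * k] p) +
      ((-(0:ℝ)) ^ k / (k.factorial : ℝ)) * (eval (r 0) (derivative (D^[2 * k] p)) * deriv r 0)
    with hA'def
  have hA : ∀ k ∈ Finset.range (n / 2 + 1),
      HasDerivAt (fun θ : ℝ => (-θ) ^ k / (k.factorial : ℝ) * (D^[2 * k] p).eval (r θ)) (A' k) 0 := by
    intro k _
    have h1 : HasDerivAt (fun θ : ℝ => (-θ) ^ k / (k.factorial : ℝ))
        (↑k * (-(0:ℝ)) ^ (k - 1) * (-1) / (k.factorial : ℝ)) 0 :=
      ((hasDerivAt_id (0:ℝ)).neg.pow k).div_const _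
    have h2 : HasDerivAt (fun θ : ℝ => (D^[2 * k] p).eval (r θ))
        (eval (r 0) (derivative (D^[2 * k] p)) * deriv r 0) 0 :=
      (Polynomial.hasDerivAt (D^[2 * k] p) (r 0)).comp 0 hr.hasDerivAt
    exact h1.mul h2
  have hF : HasDerivAt (fun θ : ℝ => ∑ k ∈ Finset.range (n / 2 + 1),
      (-θ) ^ k / (k.factorial : ℝ) * (D^[2 * k] p).eval (r θ))
      (∑ k ∈ Finset.range (n / 2 + 1), A' k) 0 := HasDerivAt.fun_sum hA
  have hd0 : deriv (fun θ : ℝ => ∑ k ∈ Finset.range (n / 2 + 1),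
      (-θ) ^ k / (k.factorial : ℝ) * (D^[2 * k] p).eval (r θ)) 0 = 0 := by
    have heq : (fun θ : ℝ => ∑ k ∈ Finset.range (n / 2 + 1),
        (-θ) ^ k / (k.factorial : ℝ) * (D^[2 * k] p).eval (r θ)) =ᶠ[nhds (0:ℝ)]
        (fun _ => (0:ℝ)) := hq
    rw [heq.deriv_eq, deriv_const]
  have hsum0 : ∑ k ∈ Finset.range (n / 2 + 1), A' k = 0 := by rw [← hF.deriv, hd0]
  have hA'0 : A' 0 = eval (r 0) (derivative p) * deriv r 0 := by
    rw [hA'def]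
    norm_num
  have hA'1 : A' 1 = -eval (r 0) (derivative (derivative p)) := by
    have hit : D^[2 * 1] p = derivative (derivative p) := rfl
    rw [hA'def]
    simp only [hit]
    norm_num
  have hA'k : ∀ k, 2 ≤ k → A' k = 0 := by
    intro k hk
    have e1 : (-(0:ℝ)) ^ (k - 1) = 0 := by
      rw [neg_zero]; exact zero_pow (by omega)
    have e2 : (-(0:ℝ)) ^ k = 0 := by
      rw [neg_zero]; exact zero_pow (by omega)
    rw [hA'def]
    simp [zero_pow (show k - 1 ≠ 0 by omega), zero_pow (show k ≠ 0 by omega)]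
  -- key equation
  have key : eval (lam i) (derivative p) * deriv r 0 = eval (lam i) (derivative (derivative p)) := by
    by_cases hn2 : 2 ≤ n
    · have hsub : Finset.range 2 ⊆ Finset.range (n / 2 + 1) := Finset.range_subset_range.2 (by omega)
      have hcol : ∑ k ∈ Finset.range (n / 2 + 1), A' k = ∑ k ∈ Finset.range 2, A' k := by
        refine (Finset.sum_subset hsub fun k _ hk2 => ?_).symm
        exact hA'k k (by simp at hk2; omega)
      rw [hcol, Finset.sum_range_succ, Finset.sum_range_one, hA'0, hA'1, hr0] at hsum0
      linarith
    · have hn1 : n = 1 := by have := i.isLt; omega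
      have hrange : n / 2 + 1 = 1 := by omega
      rw [hrange, Finset.sum_range_one, hA'0, hr0] at hsum0
      have hempty : (Finset.univ.erase i : Finset (Fin n)) = ∅ := by
        subst hn1
        ext j
        simp [Subsingleton.elim j i]
      rw [hP2, hempty]
      simpa using hsum0
  -- final algebra
  rw [hP1, hP2] at key
  have hne : ∀ j ∈ Finset.univ.erase i, lam i - lam j ≠ 0 := by
    intro j hj
    exact sub_ne_zero.2 fun h => (Finset.mem_erase.1 hj).1 (hinj h.symm)
  have hPne : (∏ a ∈ Finset.univ.erase i, (lam i - lam a)) ≠ 0 :=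
    Finset.prod_ne_zero_iff.2 hne
  have hgoal : (∑ j ∈ Finset.univ.erase i, 2 / (lam i - lam j)) *
      (∏ a ∈ Finset.univ.erase i, (lam i - lam a)) =
      2 * ∑ j ∈ Finset.univ.erase i, ∏ a ∈ (Finset.univ.erase i).erase j, (lam i - lam a) := by
    rw [Finset.sum_mul, Finset.mul_sum]
    refine Finset.sum_congr rfl fun j hj => ?_
    rw [← Finset.mul_prod_erase _ _ hj]
    have := hne j hj
    field_simp
  have : (∏ a ∈ Finset.univ.erase i, (lam i - lam a)) * deriv r 0 =
      (∏ a ∈ Finset.univ.erase i, (lam i - lam a)) * ∑ j ∈ Finset.univ.erase i, 2 / (lam i - lam j) := by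
    rw [key, ← hgoal]; ring
  exact mul_left_cancel₀ hPne this
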